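/- Let Q_j(n) ~ P_{1,j}(n) be the number of white balls after n draws in the classical Pólya urn started with 1 black and j white balls, and let V_j ~ Beta(j,1). Then there is a coupling of Q_j(n) and V_j on a common probability space such that |Q_j(n) − n·V_j| < j+1 almost surely. -/

import Mathlib

open MeasureTheory Set

/-- Probability mass function of the number of white balls after `n` draws in the
classical Pólya urn started with `b` black and `w` white balls. -/
noncomputable def polyaPMF (b w : ℕ) : ℕ → ℕ → ℝ
  | 0 => fun k => if k = w then 1 else 0
  | n + 1 => fun k =>
      polyaPMF b w n k * (1 - (k : ℝ) / ((w + b + n : ℕ) : ℝ)) +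
      polyaPMF b w n (k - 1) * (((k : ℝ) - 1) / ((w + b + n : ℕ) : ℝ))

noncomputable def Hc (j n k : ℕ) : ℝ :=
  ∏ i ∈ Finset.range j, ((min k (n + j) - i : ℕ) : ℝ) / ((n + j - i : ℕ) : ℝ)

lemma Hc_nonneg (j n k : ℕ) : 0 ≤ Hc j n k := by
  apply Finset.prod_nonneg; intro i _; positivity

lemma Hc_of_lt {j k : ℕ} (n : ℕ) (h : k < j) : Hc j n k = 0 := by
  apply Finset.prod_eq_zero (Finset.mem_range.2 h)
  have : min k (n + j) = k := min_eq_left (by omega)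
  simp [this]

lemma Hc_of_ge {j n k : ℕ} (h : n + j ≤ k) : Hc j n k = 1 := by
  apply Finset.prod_eq_one
  intro i hi
  have hi' := Finset.mem_range.1 hi
  have hm : min k (n + j) = n + j := min_eq_right h
  rw [hm, div_self]
  have h2 : 0 < n + j - i := by omega
  exact_mod_cast h2.ne'

lemma Hc_eq {j n k : ℕ} (h1 : j ≤ k) (h2 : k ≤ n + j) :
    Hc j n k = ∏ i ∈ Finset.range j, (((k : ℝ) - i) / (((n + j : ℕ) : ℝ) - i)) := by
  apply Finset.prod_congr rfl
  intro i hi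
  have hi' := Finset.mem_range.1 hi
  have hmin : min k (n + j) = k := min_eq_left h2
  rw [hmin]
  congr 1
  · rw [Nat.cast_sub (by omega)]
  · rw [Nat.cast_sub (by omega)]

lemma Hc_mono {j n : ℕ} : Monotone (Hc j n) := by
  intro k k' hkk
  apply Finset.prod_le_prod
  · intro i _; positivity
  · intro i hi
    have hi' := Finset.mem_range.1 hi
    have hden : (0:ℝ) < ((n + j - i : ℕ) : ℝ) := by
      have : 0 < n + j - i := by omega
      exact_mod_cast this
    gcongr

lemma Hc_le_one (j n k : ℕ) : Hc j n k ≤ 1 := by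
  calc Hc j n k ≤ Hc j n (max k (n + j)) := Hc_mono (le_max_left _ _)
    _ = 1 := Hc_of_ge (le_max_right _ _)

lemma telescope (x : ℝ) (j : ℕ) :
    (∏ i ∈ Finset.range j, (x - 1 - (i:ℝ))) * x
      = (∏ i ∈ Finset.range j, (x - (i:ℝ))) * (x - j) := by
  have h1 := Finset.prod_range_succ (fun i : ℕ => x - i) j
  have h2 := Finset.prod_range_succ' (fun i : ℕ => x - i) j
  simp only [Nat.cast_zero, sub_zero, Nat.cast_add, Nat.cast_one] at h1 h2
  have h3 : (∏ i ∈ Finset.range j, (x - 1 - (i:ℝ)))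
      = ∏ i ∈ Finset.range j, (x - ((i:ℝ) + 1)) := by
    apply Finset.prod_congr rfl; intro i _; ring
  rw [h3, ← h2, h1]

lemma Hc_pred_eq {j n k : ℕ} (hj : 1 ≤ j) (h1 : j ≤ k) (h2 : k ≤ n + j + 1) :
    Hc j n (k-1) = ∏ i ∈ Finset.range j, (((k:ℝ) - 1 - i) / (((n + j : ℕ) : ℝ) - i)) := by
  rcases eq_or_lt_of_le h1 with h | h
  · rw [Hc_of_lt n (by omega)]
    symm
    apply Finset.prod_eq_zero (Finset.mem_range.2 (show j - 1 < j by omega))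
    have : ((j - 1 : ℕ) : ℝ) = (j : ℝ) - 1 := by
      rw [Nat.cast_sub hj, Nat.cast_one]
    rw [← h, this]
    simp
  · rw [Hc_eq (by omega) (by omega)]
    apply Finset.prod_congr rfl
    intro i _
    congr 1
    rw [Nat.cast_sub (show 1 ≤ k by omega), Nat.cast_one]

lemma Hc_step {j : ℕ} (hj : 1 ≤ j) (n k : ℕ) :
    Hc j (n+1) k = Hc j n k * (1 - (k:ℝ)/((n+1+j : ℕ):ℝ))
      + Hc j n (k-1) * ((k:ℝ)/((n+1+j:ℕ):ℝ)) := by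
  have hNpos : (0:ℝ) < ((n+1+j : ℕ):ℝ) := by positivity
  rcases lt_or_ge k j with hk | hk
  · rw [Hc_of_lt _ hk, Hc_of_lt _ hk, Hc_of_lt _ (show k - 1 < j by omega)]
    ring
  rcases le_or_gt (n+1+j) k with hk2 | hk2
  · rw [Hc_of_ge (show n+1+j ≤ k by omega), Hc_of_ge (show n+j ≤ k by omega),
      Hc_of_ge (show n+j ≤ k-1 by omega)]
    field_simp
    ring
  · -- j ≤ k ≤ n + j
    rw [Hc_eq hk (by omega), Hc_eq hk (by omega), Hc_pred_eq hj hk (by omega)]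
    rw [Finset.prod_div_distrib, Finset.prod_div_distrib, Finset.prod_div_distrib]
    have hC : ∀ i ∈ Finset.range j, (0:ℝ) < ((n+1+j : ℕ):ℝ) - i := by
      intro i hi
      have hi' := Finset.mem_range.1 hi
      have : (i:ℝ) < (j:ℝ) := by exact_mod_cast hi'
      push_cast; linarith
    have hD : ∀ i ∈ Finset.range j, (0:ℝ) < ((n+j : ℕ):ℝ) - i := by
      intro i hi
      have hi' := Finset.mem_range.1 hi
      have : (i:ℝ) < (j:ℝ) := by exact_mod_cast hi'
      push_cast; linarith
    have hCpos : (0:ℝ) < ∏ i ∈ Finset.range j, (((n+1+j : ℕ):ℝ) - i) :=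
      Finset.prod_pos hC
    have hDpos : (0:ℝ) < ∏ i ∈ Finset.range j, (((n+j : ℕ):ℝ) - i) :=
      Finset.prod_pos hD
    have hBA := telescope (k:ℝ) j
    have hDC : (∏ i ∈ Finset.range j, (((n+j : ℕ):ℝ) - i)) * ((n+1+j : ℕ):ℝ)
        = (∏ i ∈ Finset.range j, (((n+1+j : ℕ):ℝ) - i)) * (((n+1+j : ℕ):ℝ) - j) := by
      have ht := telescope (((n+1+j : ℕ):ℝ)) j
      have : (∏ i ∈ Finset.range j, (((n+1+j : ℕ):ℝ) - 1 - (i:ℝ)))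
          = ∏ i ∈ Finset.range j, (((n+j : ℕ):ℝ) - i) := by
        apply Finset.prod_congr rfl; intro i _; push_cast; ring
      rw [this] at ht
      exact ht
    set A := ∏ i ∈ Finset.range j, ((k:ℝ) - i) with hA
    set B := ∏ i ∈ Finset.range j, ((k:ℝ) - 1 - (i:ℝ)) with hB
    set C := ∏ i ∈ Finset.range j, (((n+1+j : ℕ):ℝ) - i) with hCdef
    set D := ∏ i ∈ Finset.range j, (((n+j : ℕ):ℝ) - i) with hDdef
    have hNj : ((n+1+j : ℕ):ℝ) - j = (n:ℝ) + 1 := by push_cast; ring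
    rw [hNj] at hDC
    have hn1 : (0:ℝ) < (n:ℝ) + 1 := by positivity
    have hNcast : ((n+1+j : ℕ):ℝ) = (n:ℝ) + 1 + (j:ℝ) := by push_cast; ring
    have hmain : A * (D * ((n+1+j : ℕ):ℝ))
        = (A * (((n+1+j : ℕ):ℝ) - (k:ℝ)) + B * (k:ℝ)) * C := by
      linear_combination A * hDC - C * hBA - (A*C) * hNcast
    field_simp
    linear_combination hmain

lemma pmf_eq {j : ℕ} (hj : 1 ≤ j) (n : ℕ) : ∀ k : ℕ,
    polyaPMF 1 j n k = Hc j n k - Hc j n (k-1) := by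
  induction n with
  | zero =>
    intro k
    rcases lt_trichotomy k j with h | h | h
    · rw [show polyaPMF 1 j 0 k = if k = j then 1 else 0 from rfl, if_neg (by omega),
        Hc_of_lt 0 h, Hc_of_lt 0 (by omega)]
      ring
    · rw [show polyaPMF 1 j 0 k = if k = j then 1 else 0 from rfl, if_pos h,
        Hc_of_ge (by omega), Hc_of_lt 0 (by omega)]
      ring
    · rw [show polyaPMF 1 j 0 k = if k = j then 1 else 0 from rfl, if_neg (by omega),
        Hc_of_ge (by omega), Hc_of_ge (by omega)]
      ring
  | succ n ih =>
    intro k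
    have hunf : polyaPMF 1 j (n+1) k =
        polyaPMF 1 j n k * (1 - (k : ℝ) / ((j + 1 + n : ℕ) : ℝ)) +
        polyaPMF 1 j n (k - 1) * (((k : ℝ) - 1) / ((j + 1 + n : ℕ) : ℝ)) := rfl
    have hNN : (j + 1 + n : ℕ) = (n + 1 + j : ℕ) := by omega
    rw [hunf, hNN, ih k, ih (k-1)]
    rcases Nat.eq_zero_or_pos k with rfl | hk
    · simp [Hc_of_lt _ (by omega : 0 < j)]
    · have s1 := Hc_step hj n k
      have s2 := Hc_step hj n (k-1)
      have hcast : ((k-1:ℕ):ℝ) = (k:ℝ) - 1 := by rw [Nat.cast_sub hk, Nat.cast_one]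
      rw [hcast] at s2
      linear_combination s2 - s1

lemma Hc_le {j n : ℕ} (hn : 1 ≤ n) (k : ℕ) : Hc j n k ≤ (((k:ℝ)+1)/n)^j := by
  rw [show (((k:ℝ)+1)/n)^j = ∏ _i ∈ Finset.range j, (((k:ℝ)+1)/(n:ℝ)) by
    rw [Finset.prod_const, Finset.card_range]]
  apply Finset.prod_le_prod
  · intro i _; positivity
  · intro i hi
    have hi' := Finset.mem_range.1 hi
    have hden : (0:ℝ) < ((n + j - i : ℕ) : ℝ) := by
      have : 0 < n + j - i := by omega
      exact_mod_cast this
    have hnpos : (0:ℝ) < (n:ℝ) := by exact_mod_cast hn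
    rw [div_le_div_iff₀ hden hnpos]
    have hnat : (min k (n + j) - i) * n ≤ (k + 1) * (n + j - i) := by
      calc (min k (n + j) - i) * n ≤ k * n := Nat.mul_le_mul_right n (by omega)
        _ ≤ (k + 1) * n := Nat.mul_le_mul_right n (by omega)
        _ ≤ (k + 1) * (n + j - i) := Nat.mul_le_mul_left (k+1) (by omega)
    calc ((min k (n + j) - i : ℕ) : ℝ) * n = (((min k (n + j) - i) * n : ℕ) : ℝ) := by
          push_cast; ring
      _ ≤ (((k + 1) * (n + j - i) : ℕ) : ℝ) := by exact_mod_cast hnat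
      _ = ((k:ℝ) + 1) * ((n + j - i : ℕ) : ℝ) := by push_cast; ring

lemma Hc_ge {j n k : ℕ} (hj : 1 ≤ j) (hk : j + 1 ≤ k) (hk2 : k ≤ n + j) :
    (((k:ℝ) - j - 1)/n)^j ≤ Hc j n (k-1) := by
  have hn : 1 ≤ n := by omega
  have hnpos : (0:ℝ) < (n:ℝ) := by exact_mod_cast hn
  have hkr : (j:ℝ) + 1 ≤ (k:ℝ) := by exact_mod_cast hk
  have hkr2 : (k:ℝ) ≤ (n:ℝ) + (j:ℝ) := by exact_mod_cast hk2
  rw [Hc_eq (show j ≤ k - 1 by omega) (show k - 1 ≤ n + j by omega)]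
  rw [show (((k:ℝ) - j - 1)/n)^j = ∏ _i ∈ Finset.range j, (((k:ℝ) - j - 1)/(n:ℝ)) by
    rw [Finset.prod_const, Finset.card_range]]
  apply Finset.prod_le_prod
  · intro i _; apply div_nonneg (by linarith) hnpos.le
  · intro i hi
    have hi' := Finset.mem_range.1 hi
    have hir : (i:ℝ) + 1 ≤ (j:ℝ) := by exact_mod_cast hi'
    have hden : (0:ℝ) < (((n + j : ℕ) : ℝ) - i) := by push_cast; linarith
    have hc1 : ((k - 1 : ℕ) : ℝ) = (k:ℝ) - 1 := by
      rw [Nat.cast_sub (by omega), Nat.cast_one]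
    rw [div_le_div_iff₀ hnpos hden, hc1]
    have hfact : 0 ≤ ((j:ℝ) - i) * ((n:ℝ) + j + 1 - k) :=
      mul_nonneg (by linarith) (by linarith)
    push_cast
    nlinarith [hfact]

lemma Q_zero_of_nonpos {j n : ℕ} (hj : 1 ≤ j) {ω : ℝ} (hω : ω ≤ 0) :
    sInf {m | ω ≤ Hc j n m} = 0 :=
  Nat.sInf_eq_zero.2 (Or.inl (by rw [mem_setOf_eq, Hc_of_lt n hj]; exact hω))

lemma Q_zero_of_gt {j n : ℕ} {ω : ℝ} (hω : 1 < ω) :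
    sInf {m | ω ≤ Hc j n m} = 0 := by
  apply Nat.sInf_eq_zero.2 (Or.inr ?_)
  ext m
  simp only [mem_setOf_eq, mem_empty_iff_false, iff_false, not_le]
  exact (Hc_le_one j n m).trans_lt hω

lemma Q_spec {j n : ℕ} (hj : 1 ≤ j) {ω : ℝ} (hω : ω ∈ Ioc (0:ℝ) 1) (k : ℕ) :
    sInf {m | ω ≤ Hc j n m} = k ↔ (Hc j n (k-1) < ω ∧ ω ≤ Hc j n k ∧ 1 ≤ k) := by
  have hne : {m | ω ≤ Hc j n m}.Nonempty :=
    ⟨n + j, by rw [mem_setOf_eq, Hc_of_ge le_rfl]; exact hω.2⟩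
  constructor
  · rintro rfl
    have hmem := Nat.sInf_mem hne
    have hk1 : 1 ≤ sInf {m | ω ≤ Hc j n m} := by
      rcases Nat.eq_zero_or_pos (sInf {m | ω ≤ Hc j n m}) with h0 | h0
      · exfalso
        have := h0 ▸ hmem
        rw [mem_setOf_eq, Hc_of_lt n hj] at this
        exact absurd hω.1 (not_lt.2 this)
      · exact h0
    refine ⟨?_, hmem, hk1⟩
    by_contra hcon
    push_neg at hcon
    have := Nat.sInf_le (show sInf {m | ω ≤ Hc j n m} - 1 ∈ {m | ω ≤ Hc j n m} from hcon)
    omega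
  · rintro ⟨h1, h2, h3⟩
    apply le_antisymm (Nat.sInf_le h2)
    by_contra hcon
    push_neg at hcon
    have hmem := Nat.sInf_mem hne
    rw [mem_setOf_eq] at hmem
    have : Hc j n (sInf {m | ω ≤ Hc j n m}) ≤ Hc j n (k-1) := Hc_mono (by omega)
    linarith

lemma Qpre {j n : ℕ} (hj : 1 ≤ j) {k : ℕ} (hk : 1 ≤ k) :
    {ω : ℝ | sInf {m | ω ≤ Hc j n m} = k} = Ioc (Hc j n (k-1)) (Hc j n k) := by
  ext ω
  simp only [mem_setOf_eq, Set.mem_Ioc]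
  rcases le_or_gt ω 0 with h | h
  · constructor
    · intro he; rw [Q_zero_of_nonpos hj h] at he; omega
    · rintro ⟨h1, _⟩; exact absurd (h.trans_lt' (lt_of_le_of_lt (Hc_nonneg j n _) h1)) (lt_irrefl _)
  rcases le_or_gt ω 1 with h2 | h2
  · rw [Q_spec hj ⟨h, h2⟩ k]
    constructor
    · rintro ⟨a, b, _⟩; exact ⟨a, b⟩
    · rintro ⟨a, b⟩; exact ⟨a, b, hk⟩
  · constructor
    · intro he; rw [Q_zero_of_gt h2] at he; omega
    · rintro ⟨_, hb⟩; linarith [Hc_le_one j n k]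

lemma Qpre0 {j n : ℕ} (hj : 1 ≤ j) :
    {ω : ℝ | sInf {m | ω ≤ Hc j n m} = 0} = Set.Iic 0 ∪ Set.Ioi 1 := by
  ext ω
  simp only [mem_setOf_eq, Set.mem_union, Set.mem_Iic, Set.mem_Ioi]
  rcases le_or_gt ω 0 with h | h
  · simp [Q_zero_of_nonpos hj h, h]
  rcases le_or_gt ω 1 with h2 | h2
  · have := (Q_spec (n := n) hj ⟨h, h2⟩ 0)
    simp only [show ¬ (1:ℕ) ≤ 0 by omega, and_false, iff_false] at this
    constructor
    · intro he; exact absurd he this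
    · intro he; rcases he with he | he <;> linarith
  · have hno : ¬ ω ≤ 0 := by linarith
    simp [Q_zero_of_gt (n := n) h2, h2, hno]

/-- There is a coupling of `Q_j(n) ~ P_{1,j}(n)` (classical Pólya urn with 1 black
and `j` white balls) and `V_j ~ Beta(j,1)` such that `|Q_j(n) − n V_j| < j + 1`
almost surely. -/
theorem polya_beta_coupling (j n : ℕ) (hj : 1 ≤ j) :
    ∃ (Ω : Type) (mΩ : MeasurableSpace Ω) (μ : Measure Ω) (_ : IsProbabilityMeasure μ)
      (Q : Ω → ℕ) (V : Ω → ℝ), Measurable Q ∧ Measurable V ∧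
      (∀ k : ℕ, (μ {ω | Q ω = k}).toReal = polyaPMF 1 j n k) ∧
      (∀ x ∈ Icc (0:ℝ) 1, (μ {ω | V ω ≤ x}).toReal = x ^ j) ∧
      (∀ᵐ ω ∂μ, |(Q ω : ℝ) - (n : ℝ) * V ω| < (j : ℝ) + 1) := by
  classical
  have hj0 : ((j:ℝ)) ≠ 0 := by exact_mod_cast (by omega : j ≠ 0)
  have hjne : j ≠ 0 := by omega
  -- the identity (ω ^ (1/j))^j = ω for ω ≥ 0
  have hpowinv : ∀ ω : ℝ, 0 ≤ ω → (ω ^ ((j:ℝ)⁻¹)) ^ j = ω := by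
    intro ω hω
    rw [← Real.rpow_natCast (ω ^ ((j:ℝ)⁻¹)) j, ← Real.rpow_mul hω,
      inv_mul_cancel₀ hj0, Real.rpow_one]
  refine ⟨ℝ, inferInstance, volume.restrict (Set.Ioc 0 1), ?_,
    (fun ω => sInf {m | ω ≤ Hc j n m}), (fun ω => ω ^ ((j:ℝ)⁻¹)), ?_, ?_, ?_, ?_, ?_⟩
  · constructor
    simp [Measure.restrict_apply, Real.volume_Ioc]
  · -- Measurable Q
    apply measurable_to_countable'
    intro k
    rcases Nat.eq_zero_or_pos k with rfl | hk
    · show MeasurableSet {ω : ℝ | sInf {m | ω ≤ Hc j n m} = 0}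
      rw [Qpre0 hj]
      exact measurableSet_Iic.union measurableSet_Ioi
    · show MeasurableSet {ω : ℝ | sInf {m | ω ≤ Hc j n m} = k}
      rw [Qpre hj hk]
      exact measurableSet_Ioc
  · -- Measurable V
    exact (Real.continuous_rpow_const (by positivity : (0:ℝ) ≤ (j:ℝ)⁻¹)).measurable
  · -- PMF
    intro k
    rcases Nat.eq_zero_or_pos k with rfl | hk
    · have : {ω : ℝ | sInf {m | ω ≤ Hc j n m} = 0} = Set.Iic 0 ∪ Set.Ioi 1 := Qpre0 hj
      rw [this, Measure.restrict_apply (measurableSet_Iic.union measurableSet_Ioi)]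
      have hempty : (Set.Iic (0:ℝ) ∪ Set.Ioi 1) ∩ Set.Ioc 0 1 = ∅ := by
        ext ω
        simp only [Set.mem_inter_iff, Set.mem_union, Set.mem_Iic, Set.mem_Ioi,
          Set.mem_Ioc, Set.mem_empty_iff_false, iff_false]
        rintro ⟨h | h, h1, h2⟩ <;> linarith
      rw [hempty, measure_empty, pmf_eq hj n 0]
      simp
    · have : {ω : ℝ | sInf {m | ω ≤ Hc j n m} = k} = Set.Ioc (Hc j n (k-1)) (Hc j n k) :=
        Qpre hj hk
      rw [this, Measure.restrict_apply measurableSet_Ioc,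
        Set.inter_eq_left.2 (Set.Ioc_subset_Ioc (Hc_nonneg j n _) (Hc_le_one j n _)),
        Real.volume_Ioc, ENNReal.toReal_ofReal (sub_nonneg.2 (Hc_mono (by omega))),
        pmf_eq hj n k]
  · -- CDF of V
    intro x hx
    have hxj1 : x ^ j ≤ 1 := pow_le_one₀ hx.1 hx.2
    have hmeas : MeasurableSet {ω : ℝ | ω ^ ((j:ℝ)⁻¹) ≤ x} :=
      measurableSet_le (Real.continuous_rpow_const (by positivity : (0:ℝ) ≤ (j:ℝ)⁻¹)).measurable measurable_const
    have hset : {ω : ℝ | ω ^ ((j:ℝ)⁻¹) ≤ x} ∩ Set.Ioc 0 1 = Set.Ioc 0 (x^j) := by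
      ext ω
      simp only [Set.mem_inter_iff, Set.mem_setOf_eq, Set.mem_Ioc]
      constructor
      · rintro ⟨h1, h2, h3⟩
        refine ⟨h2, ?_⟩
        calc ω = (ω ^ ((j:ℝ)⁻¹)) ^ j := (hpowinv ω h2.le).symm
          _ ≤ x ^ j := pow_le_pow_left₀ (Real.rpow_nonneg h2.le _) h1 j
      · rintro ⟨h1, h2⟩
        refine ⟨?_, h1, h2.trans hxj1⟩
        have h3 : ω ^ ((j:ℝ)⁻¹) ≤ (x ^ j) ^ ((j:ℝ)⁻¹) :=
          Real.rpow_le_rpow h1.le h2 (by positivity)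
        rwa [← Real.rpow_natCast x j, ← Real.rpow_mul hx.1,
          mul_inv_cancel₀ hj0, Real.rpow_one] at h3
    rw [Measure.restrict_apply hmeas, hset, Real.volume_Ioc, sub_zero,
      ENNReal.toReal_ofReal (pow_nonneg hx.1 j)]
  · -- a.s. bound
    rw [ae_restrict_iff' measurableSet_Ioc]
    refine ae_of_all _ ?_
    intro ω hω
    set k := sInf {m | ω ≤ Hc j n m} with hkdef
    obtain ⟨hlt, hle, hk1⟩ := (Q_spec hj hω k).1 rfl
    have hkj : j ≤ k := by
      by_contra hcon
      push_neg at hcon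
      rw [Hc_of_lt n hcon] at hle
      linarith [hω.1]
    have hkn : k ≤ n + j :=
      Nat.sInf_le (by rw [Set.mem_setOf_eq, Hc_of_ge le_rfl]; exact hω.2)
    have hV0 : 0 ≤ ω ^ ((j:ℝ)⁻¹) := Real.rpow_nonneg hω.1.le _
    have hωeq : (ω ^ ((j:ℝ)⁻¹)) ^ j = ω := hpowinv ω hω.1.le
    have hjr : (1:ℝ) ≤ (j:ℝ) := by exact_mod_cast hj
    have hkjr : (j:ℝ) ≤ (k:ℝ) := by exact_mod_cast hkj
    rw [abs_lt]
    constructor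
    · -- -(j+1) < k - n V, i.e. n V < k + j + 1
      rcases Nat.eq_zero_or_pos n with rfl | hn
      · simp only [Nat.cast_zero, zero_mul, sub_zero]
        have : (0:ℝ) ≤ (k:ℝ) := Nat.cast_nonneg k
        linarith
      · have hnpos : (0:ℝ) < (n:ℝ) := by exact_mod_cast hn
        have hle2 : ω ≤ (((k:ℝ)+1)/n)^j := hle.trans (Hc_le hn k)
        have hVle : ω ^ ((j:ℝ)⁻¹) ≤ ((k:ℝ)+1)/n := by
          apply le_of_pow_le_pow_left₀ hjne (by positivity)
          rw [hωeq]; exact hle2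
        have : (n:ℝ) * (ω ^ ((j:ℝ)⁻¹)) ≤ (k:ℝ) + 1 := by
          rw [mul_comm, ← le_div_iff₀ hnpos]; exact hVle
        linarith
    · -- k - n V < j + 1
      rcases le_or_gt k j with hkj' | hkj'
      · have h1 : 0 ≤ (n:ℝ) * (ω ^ ((j:ℝ)⁻¹)) := mul_nonneg (Nat.cast_nonneg n) hV0
        have h2 : (k:ℝ) ≤ (j:ℝ) := by exact_mod_cast hkj'
        linarith
      · have hge := Hc_ge hj (by omega) hkn
        have hlt2 : (((k:ℝ) - j - 1)/n)^j < ω := lt_of_le_of_lt hge hlt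
        have hVgt : ((k:ℝ) - j - 1)/n < ω ^ ((j:ℝ)⁻¹) := by
          apply lt_of_pow_lt_pow_left₀ j hV0
          rw [hωeq]; exact hlt2
        have hn : 1 ≤ n := by omega
        have hnpos : (0:ℝ) < (n:ℝ) := by exact_mod_cast hn
        have : (k:ℝ) - j - 1 < (n:ℝ) * (ω ^ ((j:ℝ)⁻¹)) := by
          rw [div_lt_iff₀ hnpos] at hVgt
          linarith [hVgt]
        linarith
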